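/- The n-core of a partition λ — the partition obtained by repeatedly removing rim hooks of size n until none can be removed — is independent of the order/choice of removals. -/

import Mathlib

open MvPolynomial


theorem sorted_replicate_ge (m c : ℕ) : (List.replicate m c).Pairwise (· ≥ ·) := by
  induction m with
  | zero => simp
  | succ n ih =>
    rw [List.replicate_succ, List.pairwise_cons]
    exact ⟨fun b hb => (List.eq_of_mem_replicate hb).le, ih⟩

/-- `h_m` with integer index: zero for negative `m`. -/
noncomputable def hpoly (N : ℕ) (m : ℤ) : MvPolynomial (Fin N) ℚ :=
  if 0 ≤ m then hsymm (Fin N) ℚ m.toNat else 0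

/-- The Schur polynomial in `N` variables of a partition (Young diagram), via
the Jacobi–Trudi determinant `det (h_{λ_i + j - i})`. -/
noncomputable def schur (N : ℕ) (μ : YoungDiagram) : MvPolynomial (Fin N) ℚ :=
  Matrix.det (Matrix.of fun i j : Fin μ.rowLens.length =>
    hpoly N ((μ.rowLens.get i : ℤ) + (j : ℤ) - (i : ℤ)))

/-- The hook partition `(b, 1^(a-1))` (with `a` rows; intended for `a, b ≥ 1`). -/
def hookDiagram (a b : ℕ) : YoungDiagram :=
  YoungDiagram.ofRowLens (max b 1 :: List.replicate (a - 1) 1) (by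
    rw [List.sortedGE_iff_pairwise]
    simp only [List.pairwise_cons]
    refine ⟨fun x hx => ?_, sorted_replicate_ge ..⟩
    rw [List.eq_of_mem_replicate hx]
    omega)

/-- The cells of the skew shape `μ / λ`. -/
def skewCells (lam mu : YoungDiagram) : Finset (ℕ × ℕ) := mu.cells \ lam.cells

/-- Two boxes are (edgewise) adjacent. -/
def Adj (c d : ℕ × ℕ) : Prop :=
  (c.1 = d.1 ∧ (c.2 = d.2 + 1 ∨ d.2 = c.2 + 1)) ∨
  (c.2 = d.2 ∧ (c.1 = d.1 + 1 ∨ d.1 = c.1 + 1))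

/-- A set of boxes is edgewise connected. -/
def IsConnectedCells (s : Finset (ℕ × ℕ)) : Prop :=
  ∀ c ∈ s, ∀ d ∈ s, Relation.ReflTransGen (fun x y => x ∈ s ∧ y ∈ s ∧ Adj x y) c d

/-- A set of boxes contains no 2×2 square. -/
def NoSquare (s : Finset (ℕ × ℕ)) : Prop :=
  ¬∃ i j : ℕ, (i, j) ∈ s ∧ (i + 1, j) ∈ s ∧ (i, j + 1) ∈ s ∧ (i + 1, j + 1) ∈ s

/-- `μ / λ` is a rim hook (border strip): nonempty, connected, no 2×2 square. -/
def IsRimHook (lam mu : YoungDiagram) : Prop :=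
  lam ≤ mu ∧ (skewCells lam mu).Nonempty ∧ IsConnectedCells (skewCells lam mu) ∧
    NoSquare (skewCells lam mu)

/-- The number of boxes of the skew shape `μ / λ`. -/
def skewSize (lam mu : YoungDiagram) : ℕ := (skewCells lam mu).card

/-- The height (number of nonempty rows) of the skew shape `μ / λ`. -/
def skewHt (lam mu : YoungDiagram) : ℕ := ((skewCells lam mu).image Prod.fst).card

/-- The `k × (n-k)` rectangle partition `Box_{k,n}`. -/
def box (k n : ℕ) : YoungDiagram :=
  YoungDiagram.ofRowLens (List.replicate k (n - k)) (sorted_replicate_ge ..).sortedGE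

/-- The diagonal `j - i` of a box `(i, j)`. -/
def diagOf (c : ℕ × ℕ) : ℤ := (c.2 : ℤ) - (c.1 : ℤ)

/-- One step of `n`-core reduction: `μ` is obtained from `λ` by removing a rim hook
of size `n`. -/
def RemoveStep (n : ℕ) (lam mu : YoungDiagram) : Prop :=
  IsRimHook mu lam ∧ skewSize mu lam = n

namespace NcoreAux
open YoungDiagram Relation Finset

lemma rowLen_le_of_le {μ ν : YoungDiagram} (h : μ ≤ ν) (k : ℕ) : μ.rowLen k ≤ ν.rowLen k := by
  by_contra hc
  push_neg at hc
  have h1 : (k, ν.rowLen k) ∈ μ := mem_iff_lt_rowLen.2 hc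
  have h2 : (k, ν.rowLen k) ∈ ν := h h1
  simp [mem_iff_lt_rowLen] at h2

lemma ext_rowLen {μ ν : YoungDiagram} (h : ∀ k, μ.rowLen k = ν.rowLen k) : μ = ν := by
  ext ⟨k, c⟩
  rw [YoungDiagram.mem_cells, YoungDiagram.mem_cells, mem_iff_lt_rowLen, mem_iff_lt_rowLen, h]

lemma rowLen_eq_of_forall {μ : YoungDiagram} {k m : ℕ} (h : ∀ c, (k, c) ∈ μ ↔ c < m) :
    μ.rowLen k = m := by
  have h2 : ∀ c, c < μ.rowLen k ↔ c < m := fun c => by rw [← mem_iff_lt_rowLen, h]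
  by_contra hc
  rcases Nat.lt_or_ge (μ.rowLen k) m with h3 | h3
  · exact absurd ((h2 _).2 h3) (lt_irrefl _)
  · exact absurd ((h2 _).1 (lt_of_le_of_ne h3 (Ne.symm hc))) (lt_irrefl _)

lemma mem_skewCells {μ lam : YoungDiagram} {k c : ℕ} :
    (k, c) ∈ skewCells μ lam ↔ μ.rowLen k ≤ c ∧ c < lam.rowLen k := by
  rw [skewCells, Finset.mem_sdiff, YoungDiagram.mem_cells, YoungDiagram.mem_cells,
    mem_iff_lt_rowLen, mem_iff_lt_rowLen]
  omega

lemma adj_symm {c d : ℕ × ℕ} (h : Adj c d) : Adj d c := by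
  rcases h with ⟨h1, h2⟩ | ⟨h1, h2⟩
  · exact Or.inl ⟨h1.symm, h2.symm⟩
  · exact Or.inr ⟨h1.symm, h2.symm⟩

lemma rtg_symm {s : Finset (ℕ × ℕ)} {c d : ℕ × ℕ}
    (h : Relation.ReflTransGen (fun x y => x ∈ s ∧ y ∈ s ∧ Adj x y) c d) :
    Relation.ReflTransGen (fun x y => x ∈ s ∧ y ∈ s ∧ Adj x y) d c := by
  induction h with
  | refl => exact .refl
  | tail _ hstep ih =>
      exact Relation.ReflTransGen.head ⟨hstep.2.1, hstep.1, adj_symm hstep.2.2⟩ ih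

lemma adj_row {c d : ℕ × ℕ} (h : Adj c d) : d.1 ≤ c.1 + 1 ∧ c.1 ≤ d.1 + 1 := by
  rcases h with ⟨h1, _⟩ | ⟨_, h2⟩ <;> omega

lemma row_interval {s : Finset (ℕ × ℕ)} {c d : ℕ × ℕ}
    (h : Relation.ReflTransGen (fun x y => x ∈ s ∧ y ∈ s ∧ Adj x y) c d) (hc : c ∈ s) :
    ∀ k, c.1 ≤ k → k ≤ d.1 → ∃ e ∈ s, e.1 = k := by
  induction h with
  | refl => exact fun k h1 h2 => ⟨c, hc, le_antisymm h1 h2⟩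
  | @tail b e _ hstep ih =>
      intro k h1 h2
      rcases Nat.lt_or_ge b.1 k with h3 | h3
      · have := adj_row hstep.2.2
        have hk : e.1 = k := by omega
        exact ⟨e, hstep.2.1, hk⟩
      · exact ih k h1 h3

lemma cross_row {s : Finset (ℕ × ℕ)} {c d : ℕ × ℕ}
    (h : Relation.ReflTransGen (fun x y => x ∈ s ∧ y ∈ s ∧ Adj x y) c d) :
    ∀ k, c.1 ≤ k → k < d.1 → ∃ col, (k, col) ∈ s ∧ (k + 1, col) ∈ s := by
  induction h with
  | refl => intro k h1 h2; omega
  | @tail b e _ hstep ih =>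
      intro k h1 h2
      rcases Nat.lt_or_ge k b.1 with h3 | h3
      · exact ih k h1 h3
      · -- b.1 ≤ k < e.1, step b → e, so b.1 = k, e.1 = k+1, vertical
        have hr := adj_row hstep.2.2
        have hb1 : b.1 = k := by omega
        have he1 : e.1 = k + 1 := by omega
        rcases hstep.2.2 with ⟨h4, _⟩ | ⟨h4, _⟩
        · omega
        · refine ⟨b.2, ?_, ?_⟩
          · have : (b.1, b.2) = b := rfl
            rw [← hb1]; simpa [this] using hstep.1
          · have : (e.1, e.2) = e := rfl
            rw [← he1, h4]; simpa [this] using hstep.2.1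

section Struct
variable {μ lam : YoungDiagram} {i j : ℕ}

/-- abbreviation for the step relation on a cell set -/
local notation "Stp" s => (fun x y => x ∈ s ∧ y ∈ s ∧ Adj x y)

lemma connected_of_struct (hij : i ≤ j)
    (hrow : ∀ k, μ.rowLen k < lam.rowLen k ↔ i ≤ k ∧ k ≤ j)
    (hmid : ∀ k, i ≤ k → k < j → μ.rowLen k + 1 = lam.rowLen (k + 1)) :
    IsConnectedCells (skewCells μ lam) := by
  set s := skewCells μ lam with hs
  have hmem : ∀ k c, (k, c) ∈ s ↔ μ.rowLen k ≤ c ∧ c < lam.rowLen k := fun k c => mem_skewCells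
  -- move left within a row
  have hleft : ∀ k c, μ.rowLen k ≤ c → ∀ d : ℕ, (k, c + d) ∈ s →
      Relation.ReflTransGen (Stp s) (k, c + d) (k, c) := by
    intro k c hc d
    induction d with
    | zero => intro _; exact .refl
    | succ m ih =>
        intro hm
        have hm2 : (k, c + m) ∈ s := by
          rw [hmem] at hm ⊢
          omega
        refine Relation.ReflTransGen.head ?_ (ih hm2)
        exact ⟨hm, hm2, Or.inl ⟨rfl, Or.inl (by omega)⟩⟩
  have hleft' : ∀ k c c', (k, c') ∈ s → c ≤ c' → μ.rowLen k ≤ c →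
      Relation.ReflTransGen (Stp s) (k, c') (k, c) := by
    intro k c c' h1 h2 h3
    obtain ⟨d, rfl⟩ := Nat.exists_eq_add_of_le h2
    exact hleft k c h3 d h1
  -- every cell connects to the base (j, μ.rowLen j)
  have hbase : ∀ d k c, j - k ≤ d → (k, c) ∈ s →
      Relation.ReflTransGen (Stp s) (k, c) (j, μ.rowLen j) := by
    intro d
    induction d with
    | zero =>
        intro k c h1 h2
        have hk : i ≤ k ∧ k ≤ j := (hrow k).1 (by rw [hmem] at h2; omega)
        have hkj : k = j := by omega
        subst hkj
        exact hleft' k (μ.rowLen k) c h2 (by rw [hmem] at h2; omega) le_rfl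
    | succ m ih =>
        intro k c h1 h2
        have hk : i ≤ k ∧ k ≤ j := (hrow k).1 (by rw [hmem] at h2; omega)
        rcases eq_or_lt_of_le hk.2 with hkj | hkj
        · subst hkj
          exact hleft' k (μ.rowLen k) c h2 (by rw [hmem] at h2; omega) le_rfl
        · -- k < j
          have hm := hmid k hk.1 hkj
          have hc1 : (k, μ.rowLen k) ∈ s := by
            rw [hmem]
            exact ⟨le_rfl, (hrow k).2 ⟨hk.1, hk.2⟩⟩
          have hc2 : (k + 1, μ.rowLen k) ∈ s := by
            rw [hmem]
            constructor
            · exact μ.rowLen_anti k (k + 1) (by omega)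
            · omega
          have p1 : Relation.ReflTransGen (Stp s) (k, c) (k, μ.rowLen k) :=
            hleft' k (μ.rowLen k) c h2 (by rw [hmem] at h2; omega) le_rfl
          have p2 : Relation.ReflTransGen (Stp s) (k + 1, μ.rowLen k) (j, μ.rowLen j) :=
            ih (k + 1) (μ.rowLen k) (by omega) hc2
          exact p1.trans (Relation.ReflTransGen.head
            ⟨hc1, hc2, Or.inr ⟨rfl, Or.inr rfl⟩⟩ p2)
  intro c hc d hd
  obtain ⟨k1, c1⟩ := c
  obtain ⟨k2, c2⟩ := d
  exact (hbase (j - k1) k1 c1 le_rfl hc).trans (rtg_symm (hbase (j - k2) k2 c2 le_rfl hd))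

lemma nosquare_of_struct
    (hrow : ∀ k, μ.rowLen k < lam.rowLen k ↔ i ≤ k ∧ k ≤ j)
    (hmid : ∀ k, i ≤ k → k < j → μ.rowLen k + 1 = lam.rowLen (k + 1)) :
    NoSquare (skewCells μ lam) := by
  rintro ⟨a, b, h1, h2, h3, h4⟩
  rw [mem_skewCells] at h1 h2 h3 h4
  have ha : i ≤ a ∧ a ≤ j := (hrow a).1 (by omega)
  have ha1 : i ≤ a + 1 ∧ a + 1 ≤ j := (hrow (a + 1)).1 (by omega)
  have := hmid a ha.1 (by omega)
  omega

lemma skew_eq_biUnion (hle : ∀ k, μ.rowLen k ≤ lam.rowLen k)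
    (hrow : ∀ k, μ.rowLen k < lam.rowLen k ↔ i ≤ k ∧ k ≤ j) :
    skewCells μ lam = (Finset.Icc i j).biUnion
      (fun k => (Finset.Ico (μ.rowLen k) (lam.rowLen k)).image (Prod.mk k)) := by
  ext ⟨k, c⟩
  simp only [Finset.mem_biUnion, Finset.mem_Icc, Finset.mem_image, Finset.mem_Ico,
    mem_skewCells, Prod.mk.injEq]
  constructor
  · intro ⟨h1, h2⟩
    exact ⟨k, (hrow k).1 (by omega), c, ⟨h1, h2⟩, rfl, rfl⟩
  · rintro ⟨k', _, c', hc', rfl, rfl⟩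
    exact hc'

lemma sum_tele (hij : i ≤ j) (hle : ∀ k, μ.rowLen k ≤ lam.rowLen k)
    (hmid : ∀ k, i ≤ k → k < j → μ.rowLen k + 1 = lam.rowLen (k + 1)) :
    (∑ k ∈ Finset.Icc i j, (lam.rowLen k - μ.rowLen k)) + μ.rowLen j + i
      = lam.rowLen i + j := by
  induction j, hij using Nat.le_induction with
  | base =>
      rw [Finset.Icc_self, Finset.sum_singleton]
      have := hle i
      omega
  | succ m him ih =>
      rw [Finset.sum_Icc_succ_top (by omega)]
      have h1 := hmid m him (by omega)
      have h2 := hle (m + 1)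
      have h3 := ih (fun k hk1 hk2 => hmid k hk1 (by omega))
      omega

lemma skewSize_of_struct (hij : i ≤ j) (hle : ∀ k, μ.rowLen k ≤ lam.rowLen k)
    (hrow : ∀ k, μ.rowLen k < lam.rowLen k ↔ i ≤ k ∧ k ≤ j)
    (hmid : ∀ k, i ≤ k → k < j → μ.rowLen k + 1 = lam.rowLen (k + 1)) :
    skewSize μ lam + μ.rowLen j + i = lam.rowLen i + j := by
  have hcard : skewSize μ lam = ∑ k ∈ Finset.Icc i j, (lam.rowLen k - μ.rowLen k) := by
    rw [skewSize, skew_eq_biUnion hle hrow, Finset.card_biUnion]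
    · refine Finset.sum_congr rfl fun k _ => ?_
      rw [Finset.card_image_of_injective _ (fun a b h => (Prod.mk.injEq _ _ _ _ ▸ h).2), Nat.card_Ico]
    · intro a _ b _ hab
      simp only [Finset.disjoint_left, Finset.mem_image, Finset.mem_Ico]
      rintro x ⟨c, _, rfl⟩ ⟨c', _, h⟩
      exact hab (congrArg Prod.fst h).symm
  rw [hcard]
  exact sum_tele hij hle hmid

end Struct

section Beta
variable (N : ℕ)

/-- The beta-number of row `k` (first-column hook length w.r.t. `N` rows). -/
def betaFn (μ : YoungDiagram) (k : ℕ) : ℕ := μ.rowLen k + (N - 1 - k)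

/-- The beta-set of a partition. -/
def betaSet (μ : YoungDiagram) : Finset ℕ := (Finset.range N).image (betaFn N μ)

variable {N}

lemma betaFn_lt {μ : YoungDiagram} {k k' : ℕ} (h : k < k') (h' : k' < N) :
    betaFn N μ k' < betaFn N μ k := by
  have := μ.rowLen_anti k k' h.le
  unfold betaFn
  omega

lemma betaFn_injOn {μ : YoungDiagram} {k k' : ℕ} (hk : k < N) (hk' : k' < N)
    (h : betaFn N μ k = betaFn N μ k') : k = k' := by
  rcases Nat.lt_trichotomy k k' with h1 | h1 | h1
  · exact absurd h (Nat.ne_of_gt (betaFn_lt h1 hk'))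
  · exact h1
  · exact absurd h (Nat.ne_of_lt (betaFn_lt h1 hk))

lemma mem_betaSet {μ : YoungDiagram} {x : ℕ} :
    x ∈ betaSet N μ ↔ ∃ k, k < N ∧ betaFn N μ k = x := by
  constructor
  · intro hx
    obtain ⟨k, hk, he⟩ := Finset.mem_image.1 hx
    exact ⟨k, Finset.mem_range.1 hk, he⟩
  · rintro ⟨k, hk, he⟩
    exact Finset.mem_image.2 ⟨k, Finset.mem_range.2 hk, he⟩

/-- beta-sets determine the partition (among partitions supported on `< N` rows). -/
lemma betaSet_injOn {μ ν : YoungDiagram}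
    (hμ : ∀ k, N ≤ k → μ.rowLen k = 0) (hν : ∀ k, N ≤ k → ν.rowLen k = 0)
    (h : betaSet N μ = betaSet N ν) : μ = ν := by
  have key : ∀ k, k < N → μ.rowLen k = ν.rowLen k := by
    -- via sorted lists
    have hlist : (List.range N).map (betaFn N μ) = (List.range N).map (betaFn N ν) := by
      have sorted : ∀ (ρ : YoungDiagram), ((List.range N).map (betaFn N ρ)).Pairwise (· > ·) := by
        intro ρ
        rw [List.pairwise_iff_getElem]
        intro a b ha hb hab
        simp only [List.getElem_map, List.getElem_range]
        simp only [List.length_map, List.length_range] at ha hb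
        exact betaFn_lt hab hb
      have nodup : ∀ (ρ : YoungDiagram), ((List.range N).map (betaFn N ρ)).Nodup := by
        intro ρ
        exact (sorted ρ).imp (fun h => ne_of_gt h)
      have htf : ((List.range N).map (betaFn N μ)).toFinset
          = ((List.range N).map (betaFn N ν)).toFinset := by
        have e1 : ∀ (ρ : YoungDiagram), ((List.range N).map (betaFn N ρ)).toFinset
            = betaSet N ρ := by
          intro ρ
          ext x
          simp [betaSet, List.mem_map, List.mem_range, Finset.mem_image, Finset.mem_range]
        rw [e1, e1, h]
      have hperm : ((List.range N).map (betaFn N μ)).Perm ((List.range N).map (betaFn N ν)) :=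
        List.perm_of_nodup_nodup_toFinset_eq (nodup μ) (nodup ν) htf
      exact List.Perm.eq_of_pairwise (fun a b _ _ h1 h2 => (lt_asymm h1 h2).elim) (sorted μ) (sorted ν) hperm
    intro k hk
    have h1 := congrArg (fun l : List ℕ => l[k]?) hlist
    simp only [List.getElem?_map, List.getElem?_range, hk, if_pos hk, Option.map_some] at h1
    have h2 : betaFn N μ k = betaFn N ν k := by
      simpa using h1
    unfold betaFn at h2
    omega
  refine ext_rowLen fun k => ?_
  rcases Nat.lt_or_ge k N with hk | hk
  · exact key k hk
  · rw [hμ k hk, hν k hk]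

end Beta

section Count
variable {n : ℕ}

/-- number of elements of `s` congruent to `r` mod `n`. -/
def resCount (n r : ℕ) (s : Finset ℕ) : ℕ := (s.filter (fun x => x % n = r)).card

/-- closed under subtracting `n`. -/
def Flush (n : ℕ) (s : Finset ℕ) : Prop := ∀ b ∈ s, n ≤ b → b - n ∈ s

lemma resCount_move (hn : 0 < n) {s : Finset ℕ} {b : ℕ} (hb : b ∈ s) (hbn : n ≤ b)
    (hout : b - n ∉ s) (r : ℕ) :
    resCount n r (insert (b - n) (s.erase b)) = resCount n r s := by
  have hmod : (b - n) % n = b % n := by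
    conv_rhs => rw [← Nat.sub_add_cancel hbn]
    rw [Nat.add_mod_right]
  unfold resCount
  rw [Finset.filter_insert, Finset.filter_erase]
  by_cases hr : b % n = r
  · rw [if_pos (by rw [hmod, hr])]
    have hbf : b ∈ s.filter (fun x => x % n = r) := Finset.mem_filter.2 ⟨hb, hr⟩
    have hbnf : b - n ∉ (s.filter (fun x => x % n = r)).erase b :=
      fun hmem => hout (Finset.mem_filter.1 (Finset.mem_of_mem_erase hmem)).1
    rw [Finset.card_insert_of_notMem hbnf, Finset.card_erase_of_mem hbf]
    have : 0 < (s.filter (fun x => x % n = r)).card := Finset.card_pos.2 ⟨b, hbf⟩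
    omega
  · rw [if_neg (by rw [hmod]; exact hr)]
    congr 1
    apply Finset.erase_eq_of_notMem
    intro hmem
    exact hr (Finset.mem_filter.1 hmem).2

lemma downclosed_eq_range {T : Finset ℕ} (h : ∀ k, k + 1 ∈ T → k ∈ T) :
    T = Finset.range T.card := by
  have hdown : ∀ d x, x ∈ T → ∀ y, y + d = x → y ∈ T := by
    intro d
    induction d with
    | zero => intro x hx y hy; rwa [← show y = x by omega] at hx
    | succ m ih =>
        intro x hx y hy
        exact h y (ih x hx (y + 1) (by omega))
  have hsub : T ⊆ Finset.range T.card := by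
    intro x hx
    have hs2 : Finset.range (x + 1) ⊆ T := by
      intro y hy
      rw [Finset.mem_range] at hy
      exact hdown (x - y) x hx y (by omega)
    have := Finset.card_le_card hs2
    rw [Finset.card_range] at this
    rw [Finset.mem_range]
    omega
  exact Finset.eq_of_subset_of_card_le hsub (by rw [Finset.card_range])

lemma eq_of_div_mod {n a b : ℕ} (h1 : a / n = b / n) (h2 : a % n = b % n) : a = b := by
  calc a = n * (a / n) + a % n := (Nat.div_add_mod a n).symm
    _ = n * (b / n) + b % n := by rw [h1, h2]
    _ = b := Nat.div_add_mod b n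

lemma mem_of_flush (hn : 0 < n) {s : Finset ℕ} (hf : Flush n s) (x : ℕ) :
    x ∈ s ↔ x / n < resCount n (x % n) s := by
  set r := x % n with hr
  set T := (s.filter (fun y => y % n = r)).image (· / n) with hT
  have hinj : ∀ a ∈ s.filter (fun y => y % n = r), ∀ b ∈ s.filter (fun y => y % n = r),
      a / n = b / n → a = b := by
    intro a ha b hb hab
    exact eq_of_div_mod hab
      (by rw [(Finset.mem_filter.1 ha).2, (Finset.mem_filter.1 hb).2])
  have hcard : T.card = resCount n r s := Finset.card_image_of_injOn hinj
  have hdc : ∀ k, k + 1 ∈ T → k ∈ T := by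
    intro k hk
    obtain ⟨a, ha, hak⟩ := Finset.mem_image.1 hk
    obtain ⟨has, har⟩ := Finset.mem_filter.1 ha
    have han : n ≤ a := by
      have h1 : a / n * n ≤ a := Nat.div_mul_le_self a n
      have h2 : n ≤ a / n * n := by
        rw [hak]
        exact Nat.le_mul_of_pos_left n (by omega)
      omega
    have hsub : a - n ∈ s := hf a has han
    have hmod : (a - n) % n = a % n := by
      conv_rhs => rw [← Nat.sub_add_cancel han]
      rw [Nat.add_mod_right]
    have hdiv : (a - n) / n = k := by
      have h3 : (a - n + n) / n = (a - n) / n + 1 := Nat.add_div_right _ hn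
      rw [Nat.sub_add_cancel han] at h3
      omega
    exact Finset.mem_image.2 ⟨a - n, Finset.mem_filter.2 ⟨hsub, by rw [hmod, har]⟩, hdiv⟩
  have hrange : T = Finset.range (resCount n r s) := by
    rw [← hcard]; exact downclosed_eq_range hdc
  constructor
  · intro hx
    have : x / n ∈ T :=
      Finset.mem_image.2 ⟨x, Finset.mem_filter.2 ⟨hx, rfl⟩, rfl⟩
    rwa [hrange, Finset.mem_range] at this
  · intro hx
    have hxT : x / n ∈ T := by rw [hrange, Finset.mem_range]; exact hx
    obtain ⟨a, ha, hax⟩ := Finset.mem_image.1 hxT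
    obtain ⟨has, har⟩ := Finset.mem_filter.1 ha
    have : a = x := eq_of_div_mod hax (by rw [har])
    rwa [← this]

lemma flush_ext (hn : 0 < n) {s t : Finset ℕ} (hs : Flush n s) (ht : Flush n t)
    (hc : ∀ r, resCount n r s = resCount n r t) : s = t := by
  ext x
  rw [mem_of_flush hn hs, mem_of_flush hn ht, hc]

end Count

lemma step_beta {n N : ℕ} (hn : 0 < n) {lam mu : YoungDiagram}
    (hsupp : ∀ k, 0 < lam.rowLen k → k + 1 < N)
    (h : RemoveStep n lam mu) :
    (∃ b, b ∈ betaSet N lam ∧ n ≤ b ∧ b - n ∉ betaSet N lam ∧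
      betaSet N mu = insert (b - n) ((betaSet N lam).erase b)) := by
  obtain ⟨⟨hle, hne, hconn, hnsq⟩, hsz⟩ := h
  have hml : ∀ k, mu.rowLen k ≤ lam.rowLen k := rowLen_le_of_le hle
  set s := skewCells mu lam with hs
  have hmem : ∀ k c, (k, c) ∈ s ↔ mu.rowLen k ≤ c ∧ c < lam.rowLen k := fun k c => mem_skewCells
  have hneim : (s.image Prod.fst).Nonempty := hne.image _
  set i := (s.image Prod.fst).min' hneim with hi
  set j := (s.image Prod.fst).max' hneim with hj
  obtain ⟨ci, hci, hcifst⟩ := Finset.mem_image.1 ((s.image Prod.fst).min'_mem hneim)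
  obtain ⟨cj, hcj, hcjfst⟩ := Finset.mem_image.1 ((s.image Prod.fst).max'_mem hneim)
  have hbounds : ∀ c ∈ s, i ≤ c.1 ∧ c.1 ≤ j := fun c hc =>
    ⟨Finset.min'_le _ _ (Finset.mem_image_of_mem _ hc),
     Finset.le_max' _ _ (Finset.mem_image_of_mem _ hc)⟩
  have hij : i ≤ j := by
    have := hbounds ci hci
    omega
  have hpath := hconn ci hci cj hcj
  have hA : ∀ k, i ≤ k → k ≤ j → mu.rowLen k < lam.rowLen k := by
    intro k h1 h2
    obtain ⟨e, he, hek⟩ := row_interval hpath hci k (by omega) (by omega)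
    have : (e.1, e.2) = e := rfl
    rw [← this, hek] at he
    rw [hmem] at he
    omega
  have hrow : ∀ k, mu.rowLen k < lam.rowLen k ↔ i ≤ k ∧ k ≤ j := by
    intro k
    refine ⟨fun hk => ?_, fun hk => hA k hk.1 hk.2⟩
    have : (k, mu.rowLen k) ∈ s := (hmem _ _).2 ⟨le_rfl, hk⟩
    exact hbounds _ this
  have houter : ∀ k, k < i ∨ j < k → mu.rowLen k = lam.rowLen k := by
    intro k hk
    have h1 := hml k
    have h2 := hrow k
    omega
  have hmid : ∀ k, i ≤ k → k < j → mu.rowLen k + 1 = lam.rowLen (k + 1) := by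
    intro k h1 h2
    -- crossing: mu_k < lam_{k+1}
    obtain ⟨col, hc1, hc2⟩ := cross_row hpath k (by omega) (by omega)
    rw [hmem] at hc1 hc2
    -- no square: lam_{k+1} ≤ mu_k + 1
    by_contra hcon
    have hsq : lam.rowLen (k + 1) ≥ mu.rowLen k + 2 := by omega
    have m1 : mu.rowLen (k + 1) ≤ mu.rowLen k := mu.rowLen_anti k (k + 1) (by omega)
    have m2 : lam.rowLen (k + 1) ≤ lam.rowLen k := lam.rowLen_anti k (k + 1) (by omega)
    have hAk := hA k h1 (by omega)
    refine hnsq ⟨k, mu.rowLen k, ?_, ?_, ?_, ?_⟩ <;> rw [hmem] <;> omega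
  have hsize := skewSize_of_struct hij hml hrow hmid
  rw [hsz] at hsize
  -- hsize : n + mu.rowLen j + i = lam.rowLen i + j
  have hjN : j + 1 < N := hsupp j (by have := hA j hij le_rfl; omega)
  have hiN : i < N := by omega
  set b := betaFn N lam i with hb
  have hbval : b = lam.rowLen i + (N - 1 - i) := rfl
  have hnb : n ≤ b := by
    rw [hbval]
    omega
  have hbn_eq : b - n = betaFn N mu j := by
    unfold betaFn
    omega
  have hmuj : mu.rowLen j < lam.rowLen j := hA j hij le_rfl
  have hout : b - n ∉ betaSet N lam := by
    rw [mem_betaSet]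
    rintro ⟨m, hm, hmeq⟩
    rw [hbn_eq] at hmeq
    have hjj : mu.rowLen (j + 1) = lam.rowLen (j + 1) := houter (j + 1) (by omega)
    have hjm : mu.rowLen (j + 1) ≤ mu.rowLen j := mu.rowLen_anti j (j + 1) (by omega)
    rcases Nat.lt_or_ge m (j + 1) with h1 | h1
    · -- m ≤ j : betaFn lam m ≥ betaFn lam j > betaFn mu j
      have : betaFn N lam j ≤ betaFn N lam m := by
        rcases Nat.lt_or_ge m j with h2 | h2
        · exact (betaFn_lt h2 (by omega)).le
        · have : m = j := by omega
          rw [this]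
      unfold betaFn at this hmeq
      omega
    · -- m ≥ j+1 : betaFn lam m ≤ betaFn lam (j+1) < betaFn mu j
      have : betaFn N lam m ≤ betaFn N lam (j + 1) := by
        rcases Nat.lt_or_ge (j + 1) m with h2 | h2
        · exact (betaFn_lt h2 hm).le
        · have : m = j + 1 := by omega
          rw [this]
      unfold betaFn at this hmeq
      omega
  have hbmem : b ∈ betaSet N lam := mem_betaSet.2 ⟨i, hiN, rfl⟩
  -- beta formulas
  have hf1 : ∀ k, k < i ∨ j < k → betaFn N mu k = betaFn N lam k := by
    intro k hk
    unfold betaFn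
    rw [houter k hk]
  have hf2 : ∀ k, i ≤ k → k < j → betaFn N mu k = betaFn N lam (k + 1) := by
    intro k h1 h2
    have := hmid k h1 h2
    unfold betaFn
    omega
  refine ⟨b, hbmem, hnb, hout, ?_⟩
  ext x
  rw [Finset.mem_insert, Finset.mem_erase, mem_betaSet, mem_betaSet]
  constructor
  · rintro ⟨k, hk, rfl⟩
    rcases Nat.lt_or_ge k i with h1 | h1
    · refine Or.inr ⟨?_, k, hk, (hf1 k (Or.inl h1)).symm ▸ rfl⟩
      rw [hf1 k (Or.inl h1)]
      intro hcon
      have := betaFn_injOn hk hiN hcon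
      omega
    rcases Nat.lt_or_ge k j with h2 | h2
    · refine Or.inr ⟨?_, k + 1, by omega, (hf2 k h1 h2).symm⟩
      rw [hf2 k h1 h2]
      intro hcon
      have := betaFn_injOn (show k + 1 < N by omega) hiN hcon
      omega
    rcases Nat.lt_or_ge j k with h3 | h3
    · refine Or.inr ⟨?_, k, hk, (hf1 k (Or.inr h3)).symm ▸ rfl⟩
      rw [hf1 k (Or.inr h3)]
      intro hcon
      have := betaFn_injOn hk hiN hcon
      omega
    · have : k = j := by omega
      subst this
      exact Or.inl hbn_eq.symm
  · rintro (rfl | ⟨hxb, m, hm, rfl⟩)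
    · exact ⟨j, by omega, hbn_eq.symm⟩
    · have hmi : m ≠ i := fun hc => hxb (by rw [hc])
      rcases Nat.lt_or_ge m i with h1 | h1
      · exact ⟨m, hm, hf1 m (Or.inl h1)⟩
      rcases Nat.lt_or_ge j m with h2 | h2
      · exact ⟨m, hm, hf1 m (Or.inr h2)⟩
      · -- i < m ≤ j
        have h3 : i < m := by omega
        refine ⟨m - 1, by omega, ?_⟩
        rw [hf2 (m - 1) (by omega) (by omega)]
        congr 1
        omega

lemma exists_step_of_not_flush {n N : ℕ} (hn : 0 < n) {lam : YoungDiagram}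
    (hsupp : ∀ k, 0 < lam.rowLen k → k + 1 < N)
    (hnf : ¬ Flush n (betaSet N lam)) :
    ∃ mu, RemoveStep n lam mu := by
  rw [Flush] at hnf
  push_neg at hnf
  obtain ⟨b, hb, hbn, hout⟩ := hnf
  obtain ⟨i, hiN, hieq⟩ := mem_betaSet.1 hb
  set J := (Finset.range N).filter (fun k => b - n < betaFn N lam k) with hJ
  have hiJ : i ∈ J := by
    rw [hJ, Finset.mem_filter, Finset.mem_range]
    exact ⟨hiN, by rw [hieq]; omega⟩
  have hJne : J.Nonempty := ⟨i, hiJ⟩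
  set j := J.max' hJne with hjdef
  have hjJ : j ∈ J := J.max'_mem hJne
  have hjN : j < N := Finset.mem_range.1 (Finset.mem_filter.1 hjJ).1
  have hbnj : b - n < betaFn N lam j := (Finset.mem_filter.1 hjJ).2
  have hij : i ≤ j := Finset.le_max' _ _ hiJ
  have hmax : ∀ k, j < k → k < N → betaFn N lam k < b - n := by
    intro k h1 h2
    have hk : k ∉ J := fun hmem => absurd (Finset.le_max' _ _ hmem) (by omega)
    rw [hJ, Finset.mem_filter, Finset.mem_range] at hk
    push_neg at hk
    have hle := hk h2
    have hne2 : betaFn N lam k ≠ b - n := fun hc => hout (mem_betaSet.2 ⟨k, h2, hc⟩)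
    omega
  have f1 : N - 1 - j ≤ b - n := by
    rcases Nat.lt_or_ge (j + 1) N with h1 | h1
    · have := hmax (j + 1) (by omega) h1
      unfold betaFn at this
      omega
    · omega
  have hbnjv : b - n < lam.rowLen j + (N - 1 - j) := hbnj
  have f2 : 0 < lam.rowLen j := by omega
  have hlamj1 : lam.rowLen (j + 1) ≤ b - n - (N - 1 - j) := by
    rcases Nat.lt_or_ge (j + 1) N with h1 | h1
    · have := hmax (j + 1) (by omega) h1
      unfold betaFn at this
      omega
    · have : lam.rowLen (j + 1) = 0 := by
        by_contra hc
        have := hsupp (j + 1) (by omega)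
        omega
      omega
  set f : ℕ → ℕ := fun k =>
    if k < i then lam.rowLen k
    else if k < j then lam.rowLen (k + 1) - 1
    else if k = j then b - n - (N - 1 - j) else lam.rowLen k with hf
  have hfj : f j = b - n - (N - 1 - j) := by
    simp only [hf]
    split_ifs with h1 h2 h3 <;> omega
  have hfjlt : f j < lam.rowLen j := by rw [hfj]; omega
  have hfla : ∀ k, f k ≤ lam.rowLen k := by
    intro k
    simp only [hf]
    split_ifs with h1 h2 h3
    · exact le_rfl
    · have := lam.rowLen_anti k (k + 1) (by omega)
      omega
    · subst h3
      omega
    · exact le_rfl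
  have hfval : ∀ k, i ≤ k → k < j → f k = lam.rowLen (k + 1) - 1 := by
    intro k h1 h2
    simp only [hf]
    rw [if_neg (by omega : ¬ k < i), if_pos h2]
  have hfout : ∀ k, k < i ∨ j < k → f k = lam.rowLen k := by
    intro k hk
    simp only [hf]
    rcases hk with h1 | h1
    · rw [if_pos h1]
    · rw [if_neg (by omega : ¬ k < i), if_neg (by omega : ¬ k < j),
        if_neg (by omega : k ≠ j)]
  have hfrow : ∀ k, f k < lam.rowLen k ↔ i ≤ k ∧ k ≤ j := by
    intro k
    constructor
    · intro hk
      by_contra hc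
      rw [hfout k (by omega)] at hk
      omega
    · rintro ⟨h1, h2⟩
      rcases Nat.lt_or_ge k j with h3 | h3
      · rw [hfval k h1 h3]
        have ha1 := lam.rowLen_anti k (k + 1) (by omega)
        have ha2 := lam.rowLen_anti k j (by omega)
        omega
      · have : k = j := by omega
        subst this
        exact hfjlt
  have hfmono : ∀ k, f (k + 1) ≤ f k := by
    intro k
    rcases Nat.lt_or_ge (k + 1) i with h1 | h1
    · rw [hfout k (by omega), hfout (k + 1) (by omega)]
      exact lam.rowLen_anti k (k + 1) (by omega)
    rcases Nat.lt_or_ge k j with h2 | h2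
    · -- k < j, k+1 ≥ i
      have hk1 : f k ≥ lam.rowLen (k + 1) - 1 := by
        rcases Nat.lt_or_ge k i with h3 | h3
        · rw [hfout k (Or.inl h3)]
          have := lam.rowLen_anti k (k + 1) (by omega)
          omega
        · rw [hfval k h3 h2]
      rcases Nat.lt_or_ge (k + 1) j with h4 | h4
      · rw [hfval (k + 1) h1 h4]
        have := lam.rowLen_anti (k + 1) (k + 1 + 1) (by omega)
        omega
      · have hkj : k + 1 = j := by omega
        rw [hkj] at hk1
        rw [hkj, hfj]
        omega
    rcases Nat.lt_or_ge j (k + 1) with h3 | h3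
    swap
    · omega
    rcases Nat.lt_or_ge j k with h4 | h4
    · rw [hfout k (Or.inr h4), hfout (k + 1) (Or.inr (by omega))]
      exact lam.rowLen_anti k (k + 1) (by omega)
    · have hkj : k = j := by omega
      rw [hfout (k + 1) (Or.inr (by omega)), hkj, hfj]
      exact hlamj1
  have hfanti : Antitone f := antitone_nat_of_succ_le hfmono
  -- construct mu
  set mu : YoungDiagram :=
    ⟨lam.cells.filter (fun p => p.2 < f p.1), by
      intro p q hqp hp
      simp only [Finset.coe_filter, Set.mem_setOf_eq] at hp ⊢
      obtain ⟨hp1, hp2⟩ := hp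
      refine ⟨lam.isLowerSet hqp hp1, ?_⟩
      calc q.2 ≤ p.2 := hqp.2
        _ < f p.1 := hp2
        _ ≤ f q.1 := hfanti hqp.1⟩ with hmu
  have hmu_mem : ∀ k c, (k, c) ∈ mu ↔ c < f k := by
    intro k c
    rw [hmu]
    constructor
    · intro hkc
      have := Finset.mem_filter.1 hkc
      exact this.2
    · intro hkc
      refine Finset.mem_filter.2 ⟨?_, hkc⟩
      rw [YoungDiagram.mem_cells, mem_iff_lt_rowLen]
      exact lt_of_lt_of_le hkc (hfla k)
  have hmur : ∀ k, mu.rowLen k = f k := fun k => rowLen_eq_of_forall (hmu_mem k)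
  have hmule : mu ≤ lam := by
    rw [← YoungDiagram.cells_subset_iff]
    exact Finset.filter_subset _ _
  have hrow' : ∀ k, mu.rowLen k < lam.rowLen k ↔ i ≤ k ∧ k ≤ j := by
    intro k
    rw [hmur]
    exact hfrow k
  have hmid' : ∀ k, i ≤ k → k < j → mu.rowLen k + 1 = lam.rowLen (k + 1) := by
    intro k h1 h2
    rw [hmur, hfval k h1 h2]
    have := lam.rowLen_anti (k + 1) j (by omega)
    omega
  have hne : (skewCells mu lam).Nonempty := by
    refine ⟨(j, f j), ?_⟩
    rw [mem_skewCells, hmur j]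
    exact ⟨le_rfl, hfjlt⟩
  have hsize := skewSize_of_struct hij (fun k => rowLen_le_of_le hmule k) hrow' hmid'
  rw [hmur j, hfj] at hsize
  have hieqv : lam.rowLen i + (N - 1 - i) = b := hieq
  have hszn : skewSize mu lam = n := by omega
  exact ⟨mu, ⟨hmule, hne, connected_of_struct hij hrow' hmid', nosquare_of_struct hrow' hmid'⟩,
    hszn⟩

lemma reach_invariant {n N : ℕ} (hn : 0 < n) {lam nu : YoungDiagram}
    (hsupp : ∀ k, 0 < lam.rowLen k → k + 1 < N)
    (h : Relation.ReflTransGen (RemoveStep n) lam nu) :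
    nu ≤ lam ∧ ∀ r, resCount n r (betaSet N nu) = resCount n r (betaSet N lam) := by
  induction h with
  | refl => exact ⟨le_rfl, fun r => rfl⟩
  | @tail p q hlp hstep ih =>
      obtain ⟨hle, hcount⟩ := ih
      have hsuppp : ∀ k, 0 < p.rowLen k → k + 1 < N := fun k hk =>
        hsupp k (lt_of_lt_of_le hk (rowLen_le_of_le hle k))
      obtain ⟨β, hβmem, hβn, hβout, hβset⟩ := step_beta hn hsuppp hstep
      refine ⟨le_trans hstep.1.1 hle, fun r => ?_⟩
      rw [hβset, resCount_move hn hβmem hβn hβout r, hcount]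

theorem main (n : ℕ) (hn : 0 < n) (lam nu₁ nu₂ : YoungDiagram)
    (h1 : Relation.ReflTransGen (RemoveStep n) lam nu₁)
    (h2 : Relation.ReflTransGen (RemoveStep n) lam nu₂)
    (c1 : ¬∃ mu, RemoveStep n nu₁ mu) (c2 : ¬∃ mu, RemoveStep n nu₂ mu) :
    nu₁ = nu₂ := by
  set N := lam.colLen 0 + 1 with hN
  have hsupp : ∀ k, 0 < lam.rowLen k → k + 1 < N := by
    intro k hk
    have h0 : (k, 0) ∈ lam := mem_iff_lt_rowLen.2 hk
    have := mem_iff_lt_colLen.1 h0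
    omega
  obtain ⟨hle1, hcount1⟩ := reach_invariant hn hsupp h1
  obtain ⟨hle2, hcount2⟩ := reach_invariant hn hsupp h2
  have hsupp1 : ∀ k, 0 < nu₁.rowLen k → k + 1 < N := fun k hk =>
    hsupp k (lt_of_lt_of_le hk (rowLen_le_of_le hle1 k))
  have hsupp2 : ∀ k, 0 < nu₂.rowLen k → k + 1 < N := fun k hk =>
    hsupp k (lt_of_lt_of_le hk (rowLen_le_of_le hle2 k))
  have hf1 : Flush n (betaSet N nu₁) := by
    by_contra hc
    exact c1 (exists_step_of_not_flush hn hsupp1 hc)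
  have hf2 : Flush n (betaSet N nu₂) := by
    by_contra hc
    exact c2 (exists_step_of_not_flush hn hsupp2 hc)
  have hbeq : betaSet N nu₁ = betaSet N nu₂ :=
    flush_ext hn hf1 hf2 (fun r => (hcount1 r).trans (hcount2 r).symm)
  exact betaSet_injOn
    (fun k hk => by
      by_contra hc
      have := hsupp1 k (by omega)
      omega)
    (fun k hk => by
      by_contra hc
      have := hsupp2 k (by omega)
      omega)
    hbeq

end NcoreAux

/-- the `n`-core of a partition is well defined: any two maximal
sequences of removals of rim hooks of size `n` terminate at the same partition. -/
theorem n_core_well_defined (n : ℕ) (hn : 0 < n) (lam nu₁ nu₂ : YoungDiagram)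
    (h1 : Relation.ReflTransGen (RemoveStep n) lam nu₁)
    (h2 : Relation.ReflTransGen (RemoveStep n) lam nu₂)
    (c1 : ¬∃ mu, RemoveStep n nu₁ mu) (c2 : ¬∃ mu, RemoveStep n nu₂ mu) :
    nu₁ = nu₂ :=
  NcoreAux.main n hn lam nu₁ nu₂ h1 h2 c1 c2
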